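/- Critical time periods force supply gaps: in the single-node energy system model, suppose additionally that the conversion output is capped, δ⁻ t ≤ C for all t, and the electricity storage is capped, sEl t ≤ S for all t, with C, S ≥ 0. Let t₀ ≤ t₁ ≤ T be time indices defining the consecutive period Ico t₀ t₁. If the maximal possible supply over the period is strictly less than its demand, i.e., ∑_{t ∈ Ico t₀ t₁} ∑_{p} a t p * x p + (t₁ − t₀) * C + S < ∑_{t ∈ Ico t₀ t₁} d t, then every operation schedule for x incurs a strictly positive supply gap over the period: ∑_{t ∈ Ico t₀ t₁} Δ t > 0. -/
import Mathlib

/-- An operation schedule for the single-node energy system model: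
`a` production coefficients, `d` demands, `αp`/`αm` conversion efficiencies,
`x` capacities, `sEl`/`sH2` storage levels, `δp`/`δm` conversion in/out-flows,
`Δ` load shedding. -/
def IsSchedule (T P : ℕ) (a : Fin T → Fin P → ℝ) (d : Fin T → ℝ) (αp αm : ℝ)
    (x : Fin P → ℝ) (sEl sH2 : Fin (T + 1) → ℝ) (δp δm Δ : Fin T → ℝ) : Prop :=
  (∀ t, 0 ≤ sEl t) ∧ (∀ t, 0 ≤ sH2 t) ∧
  (∀ t, 0 ≤ δp t) ∧ (∀ t, 0 ≤ δm t) ∧ (∀ t, 0 ≤ Δ t) ∧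
  (∀ t : Fin T, (∑ p, a t p * x p) + δm t - δp t
      + sEl t.castSucc - sEl t.succ + Δ t ≥ d t) ∧
  (∀ t : Fin T, sH2 t.succ = sH2 t.castSucc + αp * δp t - αm * δm t) ∧
  sEl (Fin.last T) ≥ sEl 0 ∧ sH2 (Fin.last T) ≥ sH2 0

/-- Critical time periods force supply gaps: if, with conversion
output capped by `C` and electricity storage capped by `S`, the maximal possible
supply over a consecutive period falls strictly short of its demand, then any
operation schedule has strictly positive load shedding over the period. -/
theorem critical_period_forces_supply_gap {T P : ℕ} (a : Fin T → Fin P → ℝ)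
    (d : Fin T → ℝ) (αp αm : ℝ) (ha : ∀ t p, 0 ≤ a t p) (hd : ∀ t, 0 ≤ d t)
    (hαp : 0 < αp) (hα : αp ≤ αm)
    (x : Fin P → ℝ) (sEl sH2 : Fin (T + 1) → ℝ) (δp δm Δ : Fin T → ℝ)
    (hsched : IsSchedule T P a d αp αm x sEl sH2 δp δm Δ)
    (C S : ℝ) (hC : 0 ≤ C) (hS : 0 ≤ S)
    (hδmCap : ∀ t, δm t ≤ C) (hsElCap : ∀ t, sEl t ≤ S)
    (t₀ t₁ : ℕ) (h₀₁ : t₀ ≤ t₁) (h₁ : t₁ ≤ T)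
    (hcrit : ∑ t ∈ Finset.univ.filter (fun t : Fin T => (t : ℕ) ∈ Set.Ico t₀ t₁),
          ∑ p : Fin P, a t p * x p
        + ((t₁ - t₀ : ℕ) : ℝ) * C + S <
      ∑ t ∈ Finset.univ.filter (fun t : Fin T => (t : ℕ) ∈ Set.Ico t₀ t₁), d t) :
    ∑ t ∈ Finset.univ.filter (fun t : Fin T => (t : ℕ) ∈ Set.Ico t₀ t₁), Δ t > 0 := by

  obtain ⟨hsEl, hsH2, hδp, hδm, hΔ, hbal, hdyn, hcyc1, hcyc2⟩ := hsched
  set s := Finset.univ.filter (fun t : Fin T => (t : ℕ) ∈ Set.Ico t₀ t₁) with hs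
  -- general reindexing lemma
  have key : ∀ f : Fin T → ℝ, ∑ t ∈ s, f t
      = ∑ n ∈ Finset.Ico t₀ t₁, (if h : n < T then f ⟨n, h⟩ else 0) := by
    intro f
    have hIco : Finset.Ico t₀ t₁ = (Finset.range T).filter (fun n => n ∈ Set.Ico t₀ t₁) := by
      ext n
      simp only [Finset.mem_filter, Finset.mem_range, Set.mem_Ico, Finset.mem_Ico]
      omega
    rw [hs, Finset.sum_filter, hIco, Finset.sum_filter]
    rw [← Fin.sum_univ_eq_sum_range
      (fun n => if n ∈ Set.Ico t₀ t₁ then (if h : n < T then f ⟨n, h⟩ else 0) else 0)]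
    apply Finset.sum_congr rfl
    intro t _
    by_cases ht : (t : ℕ) ∈ Set.Ico t₀ t₁
    · simp [ht, t.isLt]
    · simp [ht]
  -- cardinality of the period
  have hcard : (s.card : ℝ) = ((t₁ - t₀ : ℕ) : ℝ) := by
    have h := key (fun _ => (1 : ℝ))
    rw [Finset.sum_const, nsmul_eq_mul, mul_one] at h
    rw [h, Finset.sum_congr rfl (fun n hn => dif_pos (by
      simp only [Finset.mem_Ico] at hn; omega)), Finset.sum_const, Nat.card_Ico,
      nsmul_eq_mul, mul_one]
  -- extended storage function
  set g : ℕ → ℝ := fun n => if hn : n ≤ T then sEl ⟨n, Nat.lt_succ_of_le hn⟩ else 0 with hg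
  have hstor : ∑ t ∈ s, (sEl t.castSucc - sEl t.succ) ≤ S := by
    rw [key]
    have heq : ∀ n ∈ Finset.Ico t₀ t₁,
        (if h : n < T then sEl (⟨n, h⟩ : Fin T).castSucc - sEl (⟨n, h⟩ : Fin T).succ else 0)
        = g n - g (n + 1) := by
      intro n hn
      simp only [Finset.mem_Ico] at hn
      have h1 : n < T := by omega
      have e1 : g n = sEl ⟨n, Nat.lt_succ_of_le (by omega)⟩ := dif_pos (by omega)
      have e2 : g (n + 1) = sEl ⟨n + 1, Nat.lt_succ_of_le (by omega)⟩ := dif_pos (by omega)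
      rw [dif_pos h1, e1, e2]
      rfl
    rw [Finset.sum_congr rfl heq, Finset.sum_Ico_eq_sum_range]
    have htel := Finset.sum_range_sub' (fun i => g (t₀ + i)) (t₁ - t₀)
    simp only [Nat.add_zero] at htel
    have e1 : g t₀ = sEl ⟨t₀, Nat.lt_succ_of_le (by omega)⟩ := dif_pos (by omega)
    have e2 : g (t₀ + (t₁ - t₀)) = sEl ⟨t₁, Nat.lt_succ_of_le (by omega)⟩ := by
      have : t₀ + (t₁ - t₀) = t₁ := by omega
      rw [this]
      exact dif_pos (by omega)
    calc ∑ i ∈ Finset.range (t₁ - t₀), (g (t₀ + i) - g (t₀ + i + 1))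
        = g t₀ - g (t₀ + (t₁ - t₀)) := htel
      _ ≤ S - 0 := by rw [e1, e2]; exact sub_le_sub (hsElCap _) (hsEl _)
      _ = S := by ring
  -- conversion out bound
  have hconv : ∑ t ∈ s, δm t ≤ ((t₁ - t₀ : ℕ) : ℝ) * C := by
    calc ∑ t ∈ s, δm t ≤ ∑ t ∈ s, C := Finset.sum_le_sum fun t _ => hδmCap t
      _ = (s.card : ℝ) * C := by rw [Finset.sum_const, nsmul_eq_mul]
      _ = ((t₁ - t₀ : ℕ) : ℝ) * C := by rw [hcard]
  have hδpsum : 0 ≤ ∑ t ∈ s, δp t := Finset.sum_nonneg fun t _ => hδp t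
  -- sum the balance
  have hbalsum : ∑ t ∈ s, d t ≤ ∑ t ∈ s, ((∑ p, a t p * x p) + δm t - δp t
      + sEl t.castSucc - sEl t.succ + Δ t) := Finset.sum_le_sum fun t _ => hbal t
  have hsplit : ∑ t ∈ s, ((∑ p, a t p * x p) + δm t - δp t
      + sEl t.castSucc - sEl t.succ + Δ t)
      = ∑ t ∈ s, (∑ p, a t p * x p) + ∑ t ∈ s, δm t - ∑ t ∈ s, δp t
        + ∑ t ∈ s, (sEl t.castSucc - sEl t.succ) + ∑ t ∈ s, Δ t := by
    rw [Finset.sum_congr rfl (fun t _ => by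
      ring : ∀ t ∈ s, (∑ p, a t p * x p) + δm t - δp t + sEl t.castSucc - sEl t.succ + Δ t
        = ((∑ p, a t p * x p) + δm t - δp t) + (sEl t.castSucc - sEl t.succ) + Δ t)]
    rw [Finset.sum_add_distrib, Finset.sum_add_distrib, Finset.sum_sub_distrib,
      Finset.sum_add_distrib]
  rw [hsplit] at hbalsum
  linarith
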